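/- For every natural number m and natural number k with k ≤ m, the integral over (0, ∞) of t^(2k)/(1+t^2)^(m+1) dt equals (π / 2^(2m+1)) · binomial(2k, k) · binomial(2m-2k, m-k) / binomial(m, k). -/

import Mathlib

open Real MeasureTheory

noncomputable def W (k n : ℕ) : ℝ := ∫ x in (0:ℝ)..(π/2), sin x ^ (2*k) * cos x ^ (2*n)

lemma Wsymm (k n : ℕ) : W k n = W n k := by
  unfold W
  have h := intervalIntegral.integral_comp_sub_left (a := (0:ℝ)) (b := π/2)
    (fun x => sin x ^ (2*n) * cos x ^ (2*k)) (π/2)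
  simp only [sin_pi_div_two_sub, cos_pi_div_two_sub, sub_zero, sub_self] at h
  rw [← h]
  congr 1; ext x; ring

lemma Wrec (k n : ℕ) : W (k+1) n = (2*k+1)/(2*k+2*n+2) * W k n := by
  have hpos : (0:ℝ) < 2*(n:ℝ)+1 := by positivity
  set u : ℝ → ℝ := fun x => sin x ^ (2*k+1) with hu_def
  set u' : ℝ → ℝ := fun x => (2*k+1 : ℝ) * sin x ^ (2*k) * cos x with hu'_def
  set v : ℝ → ℝ := fun x => -(cos x ^ (2*n+1)) / (2*(n:ℝ)+1) with hv_def
  set v' : ℝ → ℝ := fun x => sin x * cos x ^ (2*n) with hv'_def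
  have hu : ∀ x ∈ Set.uIcc (0:ℝ) (π/2), HasDerivAt u (u' x) x := by
    intro x _
    have := (Real.hasDerivAt_sin x).fun_pow (2*k+1)
    simpa [hu_def, hu'_def, mul_comm] using this
  have hv : ∀ x ∈ Set.uIcc (0:ℝ) (π/2), HasDerivAt v (v' x) x := by
    intro x _
    have := (((Real.hasDerivAt_cos x).fun_pow (2*n+1)).fun_neg).div_const (2*(n:ℝ)+1)
    convert this using 1 <;> try rfl
    push_cast
    field_simp
    ring
  have hcu' : Continuous u' := by
    exact (continuous_const.mul (Real.continuous_sin.pow _)).mul Real.continuous_cos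
  have hcv' : Continuous v' := Real.continuous_sin.mul (Real.continuous_cos.pow _)
  have hparts := intervalIntegral.integral_mul_deriv_eq_deriv_mul hu hv
    (hcu'.intervalIntegrable _ _) (hcv'.intervalIntegrable _ _)
  have hL : (∫ x in (0:ℝ)..(π/2), u x * v' x) = W (k+1) n := by
    unfold W
    congr 1; ext x
    simp only [hu_def, hv'_def]
    ring
  have hR : (∫ x in (0:ℝ)..(π/2), u' x * v x)
      = -((2*(k:ℝ)+1)/(2*(n:ℝ)+1)) * ∫ x in (0:ℝ)..(π/2), sin x ^ (2*k) * cos x ^ (2*n+2) := by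
    rw [← intervalIntegral.integral_const_mul]
    congr 1; ext x
    simp only [hu'_def, hv_def]
    push_cast
    field_simp
    ring
  have hsplit : (∫ x in (0:ℝ)..(π/2), sin x ^ (2*k) * cos x ^ (2*n+2)) = W k n - W (k+1) n := by
    unfold W
    rw [← intervalIntegral.integral_sub
      (((Real.continuous_sin.fun_pow _).fun_mul (Real.continuous_cos.fun_pow _)).intervalIntegrable _ _)
      (((Real.continuous_sin.fun_pow _).fun_mul (Real.continuous_cos.fun_pow _)).intervalIntegrable _ _)]
    congr 1; ext x
    have hsc : sin x ^ 2 = 1 - cos x ^ 2 := Real.sin_sq x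
    have : sin x ^ (2*(k+1)) = sin x ^ (2*k) * (1 - cos x ^ 2) := by
      rw [← hsc]; ring
    rw [this]
    ring
  rw [hL, hR, hsplit] at hparts
  simp only [hu_def, hv_def] at hparts
  rw [Real.sin_pi_div_two, Real.cos_pi_div_two, Real.sin_zero, Real.cos_zero] at hparts
  simp only [one_pow, zero_pow (Nat.succ_ne_zero _)] at hparts
  norm_num at hparts
  rw [div_mul_eq_mul_div, eq_div_iff hpos.ne'] at hparts
  have hden : (2*(k:ℝ)+2*(n:ℝ)+2) ≠ 0 := by positivity
  rw [div_mul_eq_mul_div, eq_div_iff hden]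
  push_cast
  linear_combination hparts

lemma Wval (k n : ℕ) : W k n
    = π/2 * (Nat.factorial (2*k)) * (Nat.factorial (2*n))
      / (4^(k+n) * (Nat.factorial k) * (Nat.factorial n) * (Nat.factorial (k+n))) := by
  induction k with
  | zero =>
    induction n with
    | zero => simp [W, mul_comm]
    | succ n ih =>
      have h := Wrec n 0
      rw [Wsymm] at h
      rw [Wsymm 0 n] at ih
      rw [h, ih]
      have h1 : (Nat.factorial (2*(n+1)) : ℝ) = (2*n+2)*(2*n+1)*Nat.factorial (2*n) := by
        have : 2*(n+1) = (2*n+1)+1 := by ring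
        rw [this, Nat.factorial_succ, Nat.factorial_succ]; push_cast; ring
      have h2 : (Nat.factorial (n+1) : ℝ) = (n+1)*Nat.factorial n := by
        rw [Nat.factorial_succ]; push_cast; ring
      simp only [Nat.mul_zero, Nat.zero_add, Nat.add_zero, Nat.zero_mul] at *
      rw [h1, h2]
      have hf1 : (Nat.factorial n : ℝ) ≠ 0 := Nat.cast_ne_zero.mpr (Nat.factorial_ne_zero n)
      field_simp
      ring
  | succ k ih =>
    rw [Wrec k n, ih]
    have h1 : (Nat.factorial (2*(k+1)) : ℝ) = (2*k+2)*(2*k+1)*Nat.factorial (2*k) := by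
      have : 2*(k+1) = (2*k+1)+1 := by ring
      rw [this, Nat.factorial_succ, Nat.factorial_succ]; push_cast; ring
    have h2 : (Nat.factorial (k+1) : ℝ) = (k+1)*Nat.factorial k := by
      rw [Nat.factorial_succ]; push_cast; ring
    have h3 : (Nat.factorial (k+1+n) : ℝ) = (k+n+1)*Nat.factorial (k+n) := by
      have : k+1+n = (k+n)+1 := by ring
      rw [this, Nat.factorial_succ]; push_cast; ring
    rw [h1, h2, h3]
    have hf1 : (Nat.factorial k : ℝ) ≠ 0 := Nat.cast_ne_zero.mpr (Nat.factorial_ne_zero k)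
    have hf2 : (Nat.factorial n : ℝ) ≠ 0 := Nat.cast_ne_zero.mpr (Nat.factorial_ne_zero n)
    have hf3 : (Nat.factorial (k+n) : ℝ) ≠ 0 := Nat.cast_ne_zero.mpr (Nat.factorial_ne_zero _)
    have h4 : (4:ℝ)^(k+1+n) = 4 * 4^(k+n) := by rw [show k+1+n = (k+n)+1 by ring, pow_succ]; ring
    rw [h4]
    field_simp
    ring

theorem wallis_type_integral (m k : ℕ) (hk : k ≤ m) :
    ∫ t in Set.Ioi (0 : ℝ), t ^ (2 * k) / (1 + t ^ 2) ^ (m + 1) =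
      (π / 2 ^ (2 * m + 1)) * (Nat.choose (2 * k) k : ℝ) *
        (Nat.choose (2 * m - 2 * k) (m - k) : ℝ) / (Nat.choose m k : ℝ) := by
  obtain ⟨n, rfl⟩ : ∃ n, m = k + n := ⟨m - k, (Nat.add_sub_cancel' hk).symm⟩
  -- substitution t = tan x
  have hmeas : MeasurableSet (Set.Ioo (0:ℝ) (π/2)) := measurableSet_Ioo
  have hsub : Set.Ioo (0:ℝ) (π/2) ⊆ Set.Ioo (-(π/2)) (π/2) := by
    intro x hx; exact ⟨by linarith [hx.1, pi_div_two_pos], hx.2⟩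
  have hcos : ∀ x ∈ Set.Ioo (0:ℝ) (π/2), 0 < cos x := fun x hx =>
    Real.cos_pos_of_mem_Ioo (hsub hx)
  have hderiv : ∀ x ∈ Set.Ioo (0:ℝ) (π/2),
      HasDerivWithinAt tan (1 / cos x ^ 2) (Set.Ioo (0:ℝ) (π/2)) x := fun x hx =>
    (Real.hasDerivAt_tan (hcos x hx).ne').hasDerivWithinAt
  have hinj : Set.InjOn tan (Set.Ioo (0:ℝ) (π/2)) := Real.injOn_tan.mono hsub
  have himg : tan '' Set.Ioo (0:ℝ) (π/2) = Set.Ioi (0:ℝ) := by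
    ext y
    constructor
    · rintro ⟨x, hx, rfl⟩
      exact Real.tan_pos_of_pos_of_lt_pi_div_two hx.1 hx.2
    · intro hy
      refine ⟨arctan y, ⟨?_, arctan_lt_pi_div_two y⟩, tan_arctan y⟩
      rw [← Real.arctan_zero]
      exact Real.arctan_strictMono hy
  have hchg := MeasureTheory.integral_image_eq_integral_abs_deriv_smul hmeas hderiv hinj
    (fun t => t ^ (2*k) / (1 + t ^ 2) ^ (k + n + 1))
  rw [himg] at hchg
  rw [hchg]
  have heq : ∀ x ∈ Set.Ioo (0:ℝ) (π/2),
      |1 / cos x ^ 2| • (tan x ^ (2*k) / (1 + tan x ^ 2) ^ (k + n + 1))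
        = sin x ^ (2*k) * cos x ^ (2*n) := by
    intro x hx
    have hc := hcos x hx
    have hc2 : (0:ℝ) < cos x ^ 2 := by positivity
    have h1 : 1 + tan x ^ 2 = 1 / cos x ^ 2 := by
      rw [Real.tan_eq_sin_div_cos]
      field_simp
      exact cos_sq_add_sin_sq x
    rw [smul_eq_mul, h1, abs_of_pos (by positivity), Real.tan_eq_sin_div_cos]
    rw [div_pow, div_pow, one_pow]
    field_simp
    rw [← pow_mul]
    ring
  rw [MeasureTheory.setIntegral_congr_fun hmeas heq]
  have hIoo : ∫ x in Set.Ioo (0:ℝ) (π/2), sin x ^ (2*k) * cos x ^ (2*n) = W k n := by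
    unfold W
    rw [intervalIntegral.integral_of_le (by positivity : (0:ℝ) ≤ π/2),
      MeasureTheory.integral_Ioc_eq_integral_Ioo]
  rw [hIoo, Wval]
  -- final factorial/binomial algebra
  have h2mk : 2*(k+n) - 2*k = 2*n := by omega
  have hmk : k + n - k = n := by omega
  rw [h2mk, hmk]
  have e1 : ((2*k).choose k : ℝ) * (Nat.factorial k) * (Nat.factorial k) = Nat.factorial (2*k) := by
    have := Nat.add_choose_mul_factorial_mul_factorial k k
    rw [show k + k = 2*k by ring] at this
    exact_mod_cast congrArg (Nat.cast : ℕ → ℝ) this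
  have e2 : ((2*n).choose n : ℝ) * (Nat.factorial n) * (Nat.factorial n) = Nat.factorial (2*n) := by
    have := Nat.add_choose_mul_factorial_mul_factorial n n
    rw [show n + n = 2*n by ring] at this
    exact_mod_cast congrArg (Nat.cast : ℕ → ℝ) this
  have e3 : ((k+n).choose k : ℝ) * (Nat.factorial n) * (Nat.factorial k) = Nat.factorial (k+n) := by
    have := Nat.add_choose_mul_factorial_mul_factorial n k
    rw [show n + k = k + n by ring] at this
    exact_mod_cast congrArg (Nat.cast : ℕ → ℝ) this
  have hf1 : (Nat.factorial k : ℝ) ≠ 0 := Nat.cast_ne_zero.mpr (Nat.factorial_ne_zero k)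
  have hf2 : (Nat.factorial n : ℝ) ≠ 0 := Nat.cast_ne_zero.mpr (Nat.factorial_ne_zero n)
  have hc3 : ((k+n).choose k : ℝ) ≠ 0 := by
    exact_mod_cast Nat.choose_pos (Nat.le_add_right k n) |>.ne'
  have hp : (2:ℝ)^(2*(k+n)+1) = 2 * 4^(k+n) := by
    rw [pow_succ, pow_mul]; norm_num; ring
  rw [← e1, ← e2, ← e3, hp]
  field_simp
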